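/- arXiv:1711.10716 — 6 statements merged into one kernel-verified Lean document; each statement's English description precedes it below -/
import Mathlib

section
/- For every positive integer n, ∑_{k=1}^n (-1)^{k+1} · (1/k) · C(n,k) = ∑_{k=1}^n 1/k, i.e., the alternating binomial sum equals the harmonic number H_n. -/
open Finset

lemma alt_sum_rat (m : ℕ) (hm : m ≠ 0) :
    ∑ i ∈ range (m + 1), (-1:ℚ)^i * (m.choose i) = 0 := by
  have h := Int.alternating_sum_range_choose_of_ne hm
  have : ((∑ i ∈ range (m + 1), (-1:ℤ)^i * (m.choose i) : ℤ) : ℚ) = 0 := by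
    rw [h]; norm_num
  push_cast at this
  convert this using 2

lemma alt_shift (m : ℕ) :
    ∑ j ∈ range (m + 1), (-1:ℚ)^j * ((m+1).choose (j+1)) = 1 := by
  have h := alt_sum_rat (m+1) (Nat.succ_ne_zero m)
  rw [Finset.sum_range_succ'] at h
  simp only [Nat.choose_zero_right, pow_zero, Nat.cast_one, mul_one] at h
  have : ∑ j ∈ range (m+1), (-1:ℚ)^(j+1) * ((m+1).choose (j+1)) = -1 := by
    linarith
  have h2 : ∀ j ∈ range (m+1), (-1:ℚ)^j * ((m+1).choose (j+1)) =
      -((-1:ℚ)^(j+1) * ((m+1).choose (j+1))) := by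
    intro j _; ring
  rw [Finset.sum_congr rfl h2, Finset.sum_neg_distrib, this]; norm_num

lemma key (m : ℕ) :
    ∑ j ∈ range m, (-1:ℚ)^j * (1/((j:ℚ)+1)) * ((m).choose (j+1)) =
      ∑ j ∈ range m, (1/((j:ℚ)+1)) := by
  induction m with
  | zero => simp
  | succ m ih =>
    have pascal : ∀ j ∈ range (m+1),
        (-1:ℚ)^j * (1/((j:ℚ)+1)) * ((m+1).choose (j+1)) =
          (-1:ℚ)^j * (1/((j:ℚ)+1)) * ((m).choose j)
            + (-1:ℚ)^j * (1/((j:ℚ)+1)) * ((m).choose (j+1)) := by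
      intro j _
      rw [Nat.choose_succ_succ]
      push_cast
      ring
    rw [Finset.sum_congr rfl pascal, Finset.sum_add_distrib]
    have hB : ∑ j ∈ range (m+1), (-1:ℚ)^j * (1/((j:ℚ)+1)) * ((m).choose (j+1)) =
        ∑ j ∈ range m, (1/((j:ℚ)+1)) := by
      rw [Finset.sum_range_succ, Nat.choose_succ_self]
      simpa using ih
    have hA : ∑ j ∈ range (m+1), (-1:ℚ)^j * (1/((j:ℚ)+1)) * ((m).choose j) =
        1/((m:ℚ)+1) := by
      have key2 : ∀ j ∈ range (m+1),
          (-1:ℚ)^j * (1/((j:ℚ)+1)) * ((m).choose j) =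
            (1/((m:ℚ)+1)) * ((-1:ℚ)^j * ((m+1).choose (j+1))) := by
        intro j _
        have h := Nat.add_one_mul_choose_eq m j
        have h' : ((m:ℚ)+1) * (m.choose j) = ((m+1).choose (j+1)) * ((j:ℚ)+1) := by
          exact_mod_cast congrArg (Nat.cast : ℕ → ℚ) h
        have hj : ((j:ℚ)+1) ≠ 0 := by positivity
        have hm : ((m:ℚ)+1) ≠ 0 := by positivity
        field_simp
        linear_combination h'
      rw [Finset.sum_congr rfl key2, ← Finset.mul_sum, alt_shift m, mul_one]
    rw [hA, hB, Finset.sum_range_succ]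
    push_cast
    ring

theorem stmt3 (n : ℕ) (hn : 0 < n) :
    ∑ k ∈ Finset.Icc 1 n, (-1:ℚ)^(k+1) * (1/(k:ℚ)) * (n.choose k) =
      ∑ k ∈ Finset.Icc 1 n, (1/(k:ℚ)) := by
  have h1 : ∑ k ∈ Finset.Icc 1 n, (-1:ℚ)^(k+1) * (1/(k:ℚ)) * (n.choose k) =
      ∑ j ∈ range n, (-1:ℚ)^j * (1/((j:ℚ)+1)) * ((n).choose (j+1)) := by
    rw [show Finset.Icc 1 n = Finset.Ico 1 (n+1) by rw [Finset.Ico_add_one_right_eq_Icc],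
      Finset.sum_Ico_eq_sum_range]
    simp only [Nat.add_sub_cancel]
    apply Finset.sum_congr rfl
    intro j _
    have : (-1:ℚ)^(1+j+1) = (-1:ℚ)^j := by
      rw [show 1+j+1 = j+2 by ring, pow_add]; norm_num
    rw [this]
    push_cast
    ring_nf
  have h2 : ∑ k ∈ Finset.Icc 1 n, (1/(k:ℚ)) = ∑ j ∈ range n, (1/((j:ℚ)+1)) := by
    rw [show Finset.Icc 1 n = Finset.Ico 1 (n+1) by rw [Finset.Ico_add_one_right_eq_Icc],
      Finset.sum_Ico_eq_sum_range]
    simp only [Nat.add_sub_cancel]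
    apply Finset.sum_congr rfl
    intro j _
    push_cast
    ring_nf
  rw [h1, h2, key]
end

section
/- For all positive integers n and all nonnegative integers m, the recursive harmonic number satisfies H_n^{(m)} = ∑_{k=1}^n (-1)^{k+1} · (1/k^m) · C(n,k). -/
def recH : ℕ → ℕ → ℚ
  | 0, _ => 1
  | m+1, n => ∑ k ∈ Finset.Icc 1 n, (1/(k:ℚ)) * recH m k

lemma base_case (n : ℕ) (hn : 0 < n) :
    ∑ k ∈ Finset.Icc 1 n, (-1:ℚ)^(k+1) * (n.choose k) = 1 := by
  have h0 : (∑ i ∈ Finset.range (n+1), (-1:ℚ)^i * (n.choose i)) = 0 := by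
    have := Int.alternating_sum_range_choose_of_ne hn.ne'
    exact_mod_cast congrArg (Int.cast : ℤ → ℚ) this
  have hsplit : (∑ i ∈ Finset.range (n+1), (-1:ℚ)^i * (n.choose i))
      = 1 + ∑ k ∈ Finset.Icc 1 n, (-1:ℚ)^k * (n.choose k) := by
    rw [Finset.range_eq_Ico, Finset.sum_eq_sum_Ico_succ_bot (Nat.succ_pos n),
      Nat.succ_eq_add_one, Finset.Ico_add_one_right_eq_Icc]
    simp
  have : ∑ k ∈ Finset.Icc 1 n, (-1:ℚ)^k * (n.choose k) = -1 := by linarith [hsplit ▸ h0]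
  calc ∑ k ∈ Finset.Icc 1 n, (-1:ℚ)^(k+1) * (n.choose k)
      = -∑ k ∈ Finset.Icc 1 n, (-1:ℚ)^k * (n.choose k) := by
        rw [← Finset.sum_neg_distrib]; apply Finset.sum_congr rfl; intro k _; ring
    _ = 1 := by rw [this]; norm_num

lemma hockey (k : ℕ) (hk : 1 ≤ k) : ∀ n : ℕ,
    ∑ j ∈ Finset.Icc k n, (1/(j:ℚ)) * (j.choose k) = (1/(k:ℚ)) * (n.choose k) := by
  intro n
  induction n with
  | zero =>
    rw [Finset.Icc_eq_empty (by omega), Nat.choose_eq_zero_of_lt hk]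
    simp
  | succ n ih =>
    by_cases h : k ≤ n + 1
    · rw [← Finset.Ico_add_one_right_eq_Icc, Finset.sum_Ico_succ_top h, Finset.Ico_add_one_right_eq_Icc, ih]
      have hnat : (n+1) * n.choose (k-1) = (n+1).choose k * k := by
        have h3 := Nat.add_one_mul_choose_eq n (k-1)
        have hkk : k - 1 + 1 = k := by omega
        rw [hkk] at h3
        exact h3
      have hpas : (n+1).choose k = n.choose k + n.choose (k-1) := by
        rcases Nat.exists_eq_add_of_le hk with ⟨j, rfl⟩
        simp [Nat.choose_succ_succ, Nat.add_comm]
      have hq : ((n:ℚ)+1) * (n.choose (k-1)) = ((n+1).choose k) * k := by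
        exact_mod_cast hnat
      have hk0 : (k:ℚ) ≠ 0 := by positivity
      have hn0 : ((n:ℚ)+1) ≠ 0 := by positivity
      have hq' : ((n:ℚ)+1) * (n.choose (k-1)) = ((n.choose k : ℚ) + n.choose (k-1)) * k := by
        rw [hq, hpas]; push_cast; ring
      rw [hpas]
      push_cast
      field_simp
      linear_combination (-1:ℚ) * hq'
    · rw [Finset.Icc_eq_empty (by omega), Nat.choose_eq_zero_of_lt (by omega)]
      simp

theorem stmt5 (n m : ℕ) (hn : 0 < n) :
    recH m n = ∑ k ∈ Finset.Icc 1 n, (-1:ℚ)^(k+1) * (1/(k:ℚ)^m) * (n.choose k) := by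
  induction m generalizing n with
  | zero =>
    show (1:ℚ) = _
    refine (base_case n hn).symm.trans ?_
    apply Finset.sum_congr rfl; intro k _; norm_num
  | succ m ih =>
    show (∑ j ∈ Finset.Icc 1 n, (1/(j:ℚ)) * recH m j) = _
    have h1 : ∀ j ∈ Finset.Icc 1 n, (1/(j:ℚ)) * recH m j
        = ∑ k ∈ Finset.Icc 1 j, (1/(j:ℚ)) * ((-1:ℚ)^(k+1) * (1/(k:ℚ)^m) * (j.choose k)) := by
      intro j hj
      rw [ih j (by simp at hj; omega), Finset.mul_sum]
    rw [Finset.sum_congr rfl h1]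
    have h2 : (∑ j ∈ Finset.Icc 1 n, ∑ k ∈ Finset.Icc 1 j,
          (1/(j:ℚ)) * ((-1:ℚ)^(k+1) * (1/(k:ℚ)^m) * (j.choose k)))
        = ∑ k ∈ Finset.Icc 1 n, ∑ j ∈ Finset.Icc k n,
          (1/(j:ℚ)) * ((-1:ℚ)^(k+1) * (1/(k:ℚ)^m) * (j.choose k)) := by
      simp only [← Finset.Ico_add_one_right_eq_Icc]
      exact (Finset.sum_Ico_Ico_comm 1 (n+1)
        (fun k j => (1/(j:ℚ)) * ((-1:ℚ)^(k+1) * (1/(k:ℚ)^m) * (j.choose k)))).symm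
    rw [h2]
    apply Finset.sum_congr rfl
    intro k hk
    have hk1 : 1 ≤ k := by simp at hk; omega
    have : (∑ j ∈ Finset.Icc k n, (1/(j:ℚ)) * ((-1:ℚ)^(k+1) * (1/(k:ℚ)^m) * (j.choose k)))
        = ((-1:ℚ)^(k+1) * (1/(k:ℚ)^m)) * ∑ j ∈ Finset.Icc k n, (1/(j:ℚ)) * (j.choose k) := by
      rw [Finset.mul_sum]; apply Finset.sum_congr rfl; intro j _; ring
    rw [this, hockey k hk1 n, pow_succ]
    ring
end

section
/- For all integers n ≥ 2 and m ≥ 1, ∑_{k=1}^n (-1)^{k+1}·(1/k^m)·C(n,k) = ∑_{k=1}^{n-1} (-1)^{k+1}·(1/k^m)·C(n-1,k) + (1/n)·∑_{k=1}^n (-1)^{k+1}·(1/k^{m-1})·C(n,k). -/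
theorem stmt9 (n m : ℕ) (hn : 2 ≤ n) (hm : 1 ≤ m) :
    ∑ k ∈ Finset.Icc 1 n, (-1:ℚ)^(k+1) * (1/(k:ℚ)^m) * (n.choose k) =
      (∑ k ∈ Finset.Icc 1 (n-1), (-1:ℚ)^(k+1) * (1/(k:ℚ)^m) * ((n-1).choose k)) +
      (1/(n:ℚ)) * ∑ k ∈ Finset.Icc 1 n, (-1:ℚ)^(k+1) * (1/(k:ℚ)^(m-1)) * (n.choose k) := by
  have hext : (∑ k ∈ Finset.Icc 1 (n-1), (-1:ℚ)^(k+1) * (1/(k:ℚ)^m) * ((n-1).choose k))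
      = ∑ k ∈ Finset.Icc 1 n, (-1:ℚ)^(k+1) * (1/(k:ℚ)^m) * ((n-1).choose k) := by
    apply Finset.sum_subset
    · intro x hx
      simp only [Finset.mem_Icc] at *
      omega
    · intro x hx hx'
      simp only [Finset.mem_Icc] at *
      have : n - 1 < x := by omega
      rw [Nat.choose_eq_zero_of_lt this]
      simp
  rw [hext, Finset.mul_sum, ← Finset.sum_add_distrib]
  apply Finset.sum_congr rfl
  intro k hk
  simp only [Finset.mem_Icc] at hk
  obtain ⟨K, rfl⟩ : ∃ K, k = K + 1 := ⟨k - 1, by omega⟩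
  obtain ⟨N, rfl⟩ : ∃ N, n = N + 1 := ⟨n - 1, by omega⟩
  obtain ⟨M, rfl⟩ : ∃ M, m = M + 1 := ⟨m - 1, by omega⟩
  simp only [Nat.add_sub_cancel]
  have key : ((N:ℚ)+1) * (N.choose K) = ((N+1).choose (K+1) : ℚ) * ((K:ℚ)+1) := by
    exact_mod_cast congrArg (Nat.cast (R := ℚ)) (Nat.add_one_mul_choose_eq N K)
  have pascal : (((N+1).choose (K+1) : ℕ) : ℚ) = (N.choose (K+1) : ℚ) + (N.choose K : ℚ) := by
    rw [Nat.choose_succ_succ]; push_cast; ring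
  have h1 : ((K:ℚ)+1) ≠ 0 := by positivity
  have h2 : ((N:ℚ)+1) ≠ 0 := by positivity
  have aux : ∀ a b p c q r s : ℚ, a ≠ 0 → b ≠ 0 → p ≠ 0 →
      b * c = r * a → r = q + c →
      s * (1/(p*a)) * r = s * (1/(p*a)) * q + 1/b * (s * (1/p) * r) := by
    intro a b p c q r s ha hb hp key pas
    field_simp
    linear_combination s * (b * pas + key)
  push_cast
  rw [pow_succ ((K:ℚ)+1) M]
  exact aux ((K:ℚ)+1) ((N:ℚ)+1) (((K:ℚ)+1)^M) _ _ _ _ h1 h2 (by positivity) key pascal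
end

section
/- For fixed n ≥ 1, the limit of H_n^{(m)} as m → ∞ equals n; equivalently, ∑_{k=1}^n (-1)^{k+1}(1/k^m)C(n,k) → n as m → ∞. -/
def Bq (k : ℕ) : ℚ := if k = 1 then 0 else 4^k

lemma Bq_nonneg (k : ℕ) : 0 ≤ Bq k := by
  unfold Bq; split <;> positivity

lemma Bq_of_ne (k : ℕ) (h : k ≠ 1) : Bq k = 4^k := by simp [Bq, h]

lemma sumBq : ∀ n : ℕ, 1 ≤ n →
    ∑ k ∈ Finset.Icc 1 n, (1/(k:ℚ)) * Bq k ≤ (2/3) * Bq n := by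
  intro n hn
  induction n, hn using Nat.le_induction with
  | base => simp [Bq]
  | succ n hn ih =>
    rw [Finset.sum_Icc_succ_top (by omega)]
    have hB1 : Bq (n+1) = 4^(n+1) := Bq_of_ne _ (by omega)
    rcases Nat.eq_or_lt_of_le hn with h1 | h2
    · rw [← h1]
      norm_num [Bq]
    · have hn2 : 2 ≤ n := by omega
      have hBn : Bq n = 4^n := Bq_of_ne _ (by omega)
      have hfrac : (1 : ℚ)/((n:ℚ)+1) ≤ 1/3 := by
        rw [div_le_div_iff₀ (by positivity) (by norm_num)]
        have : (2:ℚ) ≤ (n:ℚ) := by exact_mod_cast hn2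
        linarith
      have hpow : (0:ℚ) < 4^(n+1) := by positivity
      have h2 : (1/((n:ℚ)+1)) * Bq (n+1) ≤ (1/3) * 4^(n+1) := by
        rw [hB1]
        exact mul_le_mul_of_nonneg_right hfrac (le_of_lt hpow)
      have h3 : (2/3 : ℚ) * Bq n + (1/3) * 4^(n+1) ≤ (2/3) * Bq (n+1) := by
        rw [hBn, hB1, pow_succ]
        ring_nf
        nlinarith [pow_pos (show (0:ℚ) < 4 by norm_num) n]
      push_cast
      linarith [ih]

lemma recH_sub (m n : ℕ) :
    (n:ℚ) - recH (m+1) n = ∑ k ∈ Finset.Icc 1 n, (1/(k:ℚ)) * ((k:ℚ) - recH m k) := by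
  have h1 : ∑ k ∈ Finset.Icc 1 n, (1/(k:ℚ)) * (k:ℚ) = (n:ℚ) := by
    have he : ∀ k ∈ Finset.Icc 1 n, (1/(k:ℚ)) * (k:ℚ) = 1 := by
      intro k hk
      have hne : (k:ℚ) ≠ 0 :=
        Nat.cast_ne_zero.mpr (by have := (Finset.mem_Icc.mp hk).1; omega)
      field_simp
    rw [Finset.sum_congr rfl he]
    simp [Nat.card_Icc]
  show (n:ℚ) - ∑ k ∈ Finset.Icc 1 n, (1/(k:ℚ)) * recH m k = _
  have h2 : ∀ k ∈ Finset.Icc 1 n, (1/(k:ℚ)) * ((k:ℚ) - recH m k)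
      = (1/(k:ℚ)) * (k:ℚ) - (1/(k:ℚ)) * recH m k := fun k _ => mul_sub _ _ _
  rw [Finset.sum_congr rfl h2, Finset.sum_sub_distrib, h1]

lemma key_s14 (m : ℕ) : ∀ n : ℕ, 1 ≤ n → |(n:ℚ) - recH m n| ≤ Bq n * (2/3)^m := by
  induction m with
  | zero =>
    intro n hn
    rcases Nat.eq_or_lt_of_le hn with h1 | h2
    · rw [← h1]; simp [recH, Bq]
    · have : recH 0 n = 1 := rfl
      rw [this, pow_zero, mul_one, Bq_of_ne _ (by omega)]
      rw [abs_of_nonneg (by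
        have : (2:ℚ) ≤ (n:ℚ) := by exact_mod_cast h2
        linarith)]
      have h4 : (n:ℚ) ≤ 4^n := by
        calc (n:ℚ) = ((n:ℕ):ℚ) := rfl
        _ ≤ ((4^n : ℕ):ℚ) := by
            exact_mod_cast Nat.le_of_lt (Nat.lt_pow_self (n := n) (by norm_num))
        _ = 4^n := by push_cast; ring
      linarith
  | succ m ih =>
    intro n hn
    rw [recH_sub]
    calc |∑ k ∈ Finset.Icc 1 n, (1/(k:ℚ)) * ((k:ℚ) - recH m k)|
        ≤ ∑ k ∈ Finset.Icc 1 n, |(1/(k:ℚ)) * ((k:ℚ) - recH m k)| :=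
          Finset.abs_sum_le_sum_abs _ _
      _ ≤ ∑ k ∈ Finset.Icc 1 n, (1/(k:ℚ)) * (Bq k * (2/3)^m) := by
          apply Finset.sum_le_sum
          intro k hk
          have hk1 : 1 ≤ k := (Finset.mem_Icc.mp hk).1
          have hkpos : (0:ℚ) < k := by exact_mod_cast hk1
          rw [abs_mul, abs_of_nonneg (by positivity : (0:ℚ) ≤ 1/(k:ℚ))]
          exact mul_le_mul_of_nonneg_left (ih k hk1) (by positivity)
      _ = (∑ k ∈ Finset.Icc 1 n, (1/(k:ℚ)) * Bq k) * (2/3)^m := by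
          rw [Finset.sum_mul]
          exact Finset.sum_congr rfl (fun k _ => by ring)
      _ ≤ ((2/3) * Bq n) * (2/3)^m := by
          apply mul_le_mul_of_nonneg_right (sumBq n hn) (by positivity)
      _ = Bq n * (2/3)^(m+1) := by ring

theorem stmt14 (n : ℕ) (hn : 1 ≤ n) :
    Filter.Tendsto (fun m => ((recH m n : ℚ) : ℝ)) Filter.atTop (nhds (n : ℝ)) := by
  rw [tendsto_iff_dist_tendsto_zero]
  have hb : ∀ m : ℕ, dist ((recH m n : ℚ) : ℝ) (n:ℝ) ≤ ((Bq n : ℚ):ℝ) * (2/3)^m := by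
    intro m
    have heq : (n:ℝ) - ((recH m n : ℚ):ℝ) = (((n:ℚ) - recH m n : ℚ) : ℝ) := by
      push_cast; ring
    rw [Real.dist_eq, abs_sub_comm, heq, ← Rat.cast_abs]
    have h := key_s14 m n hn
    calc ((|(n:ℚ) - recH m n| : ℚ) : ℝ) ≤ ((Bq n * (2/3)^m : ℚ) : ℝ) := by
          exact_mod_cast h
      _ = ((Bq n : ℚ):ℝ) * (2/3)^m := by push_cast; ring
  apply squeeze_zero (fun m => dist_nonneg) hb
  have hp : Filter.Tendsto (fun m : ℕ => ((2:ℝ)/3)^m) Filter.atTop (nhds 0) :=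
    tendsto_pow_atTop_nhds_zero_of_lt_one (by norm_num) (by norm_num)
  simpa using hp.const_mul ((Bq n : ℚ):ℝ)
end

section
/- For all positive integers n and m, H_n^{(m)} = ∑_{k=1}^n (1/k) · ∑_{j=1}^k (-1)^{j+1} · (1/j^{m-1}) · C(k,j). -/
lemma sumA (i n : ℕ) :
    ∑ k ∈ Finset.Icc (i+1) n, (k.choose (i+1) : ℚ)/k = (n.choose (i+1) : ℚ)/(i+1) := by
  induction n with
  | zero => rw [Finset.Icc_eq_empty (by omega)]; simp
  | succ n ih =>
    rcases le_or_gt (i+1) (n+1) with h | h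
    · rw [Finset.sum_Icc_succ_top h, ih]
      have key : ((n:ℚ)+1) * (n.choose i) = ((n+1).choose (i+1)) * ((i:ℚ)+1) := by
        have := Nat.add_one_mul_choose_eq n i
        have : ((n+1) * n.choose i : ℕ) = ((n+1).choose (i+1) * (i+1) : ℕ) := this
        exact_mod_cast congrArg (Nat.cast : ℕ → ℚ) this
      have pascal : (((n+1).choose (i+1) : ℚ)) = (n.choose i) + (n.choose (i+1)) := by
        rw [Nat.choose_succ_succ]; push_cast; ring
      have h1 : ((n:ℚ)+1) ≠ 0 := by positivity
      have h2 : ((i:ℚ)+1) ≠ 0 := by positivity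
      have key2 : ((n:ℚ)+1) * (n.choose i) = ((n.choose i:ℚ) + (n.choose (i+1))) * ((i:ℚ)+1) := by
        rw [← pascal]; exact key
      push_cast
      rw [pascal]
      field_simp
      linear_combination (-1:ℚ) * key2
    · rw [Finset.Icc_eq_empty (by omega)]
      simp [Nat.choose_eq_zero_of_lt h]

lemma recH_closed (m : ℕ) : ∀ k, 1 ≤ k →
    recH m k = ∑ j ∈ Finset.Icc 1 k, (-1:ℚ)^(j+1) * (1/(j:ℚ)^m) * (k.choose j) := by
  induction m with
  | zero =>
    intro k hk
    have h := Int.alternating_sum_range_choose_of_ne (n := k) (by omega)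
    have h' : ∑ j ∈ Finset.range (k+1), (-1:ℚ)^j * (k.choose j) = 0 := by
      exact_mod_cast congrArg (Int.cast : ℤ → ℚ) h
    rw [Finset.range_eq_Ico, Finset.sum_eq_sum_Ico_succ_bot (by omega)] at h'
    simp only [Nat.choose_zero_right, pow_zero, Nat.cast_one, mul_one] at h'
    show (1:ℚ) = _
    have : ∑ j ∈ Finset.Icc 1 k, (-1:ℚ)^(j+1) * (1/(j:ℚ)^0) * (k.choose j)
        = -∑ j ∈ Finset.Ico 1 (k+1), (-1:ℚ)^j * (k.choose j) := by
      rw [Finset.Ico_add_one_right_eq_Icc, ← Finset.sum_neg_distrib]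
      apply Finset.sum_congr rfl
      intro j _; ring
    rw [this]; linarith
  | succ m ih =>
    intro n hn
    rw [recH]
    have step1 : ∑ k ∈ Finset.Icc 1 n, (1/(k:ℚ)) * recH m k
        = ∑ k ∈ Finset.Icc 1 n, ∑ j ∈ Finset.Icc 1 k,
            (1/(k:ℚ)) * ((-1:ℚ)^(j+1) * (1/(j:ℚ)^m) * (k.choose j)) := by
      apply Finset.sum_congr rfl
      intro k hk
      rw [ih k (Finset.mem_Icc.mp hk).1, Finset.mul_sum]
    rw [step1]
    have swap : ∑ k ∈ Finset.Icc 1 n, ∑ j ∈ Finset.Icc 1 k,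
            (1/(k:ℚ)) * ((-1:ℚ)^(j+1) * (1/(j:ℚ)^m) * (k.choose j))
        = ∑ j ∈ Finset.Icc 1 n, ∑ k ∈ Finset.Icc j n,
            (1/(k:ℚ)) * ((-1:ℚ)^(j+1) * (1/(j:ℚ)^m) * (k.choose j)) := by
      have key := Finset.sum_Ico_Ico_comm 1 (n+1) (fun i j =>
        (1/(j:ℚ)) * ((-1:ℚ)^(i+1) * (1/(i:ℚ)^m) * (j.choose i)))
      simp only [Finset.Ico_add_one_right_eq_Icc] at key
      exact key.symm
    rw [swap]
    apply Finset.sum_congr rfl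
    intro j hj
    obtain ⟨hj1, hj2⟩ := Finset.mem_Icc.mp hj
    obtain ⟨i, rfl⟩ := Nat.exists_eq_add_of_le hj1
    have inner : ∑ k ∈ Finset.Icc (1+i) n,
        (1/(k:ℚ)) * ((-1:ℚ)^((1+i)+1) * (1/((1+i:ℕ):ℚ)^m) * (k.choose (1+i)))
        = (-1:ℚ)^((1+i)+1) * (1/((1+i:ℕ):ℚ)^m) *
            ∑ k ∈ Finset.Icc (1+i) n, (k.choose (1+i) : ℚ)/k := by
      rw [Finset.mul_sum]
      apply Finset.sum_congr rfl
      intro k _; ring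
    rw [inner]
    have := sumA i n
    rw [show i+1 = 1+i by ring] at this
    rw [this]
    have h2 : (1:ℚ)+(i:ℚ) ≠ 0 := by positivity
    push_cast
    field_simp
    ring

theorem stmt15 (n m : ℕ) (hn : 0 < n) (hm : 1 ≤ m) :
    recH m n = ∑ k ∈ Finset.Icc 1 n, (1/(k:ℚ)) *
      ∑ j ∈ Finset.Icc 1 k, (-1:ℚ)^(j+1) * (1/(j:ℚ)^(m-1)) * (k.choose j) := by
  obtain ⟨m', rfl⟩ : ∃ m', m = m' + 1 := ⟨m - 1, by omega⟩
  rw [recH]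
  apply Finset.sum_congr rfl
  intro k hk
  rw [recH_closed m' k (Finset.mem_Icc.mp hk).1]
  simp
end

section
/- For all positive integers n, H_n^{(2)} = ∑_{k=1}^n (-1)^{k+1} · (1/k^2) · C(n,k). -/
open Finset

lemma lemB (n : ℕ) (hn : 1 ≤ n) :
    ∑ k ∈ Finset.Icc 1 n, (-1:ℚ)^(k+1) * (n.choose k) = 1 := by
  have h := Int.alternating_sum_range_choose (n := n)
  rw [if_neg (by omega)] at h
  have hQ : ∑ i ∈ Finset.range (n+1), (-1:ℚ)^i * (n.choose i) = 0 := by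
    exact_mod_cast congrArg (Int.cast : ℤ → ℚ) h
  have hIcc : Finset.Icc 1 n = Finset.Ico 1 (n+1) := by
    rw [Finset.Ico_add_one_right_eq_Icc]
  rw [hIcc]
  rw [Finset.range_eq_Ico,
    Finset.sum_eq_sum_Ico_succ_bot (show 0 < n+1 by omega)
      (fun i => (-1:ℚ)^i * (n.choose i))] at hQ
  simp at hQ
  have : ∑ i ∈ Finset.Ico 1 (n+1), (-1:ℚ)^(i+1) * (n.choose i)
      = - ∑ i ∈ Finset.Ico 1 (n+1), (-1:ℚ)^i * (n.choose i) := by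
    rw [← Finset.sum_neg_distrib]
    apply Finset.sum_congr rfl
    intro i _
    ring
  rw [this]
  linarith

lemma lemA (n k : ℕ) (hk : 1 ≤ k) :
    (k:ℚ) * ((n+1).choose k) = ((n:ℚ)+1) * (n.choose (k-1)) := by
  obtain ⟨m, rfl⟩ := Nat.exists_eq_add_of_le hk
  rw [Nat.add_comm 1 m]
  have h := Nat.add_one_mul_choose_eq n m
  have hc : ((n:ℚ)+1) * (n.choose m) = ((n+1).choose (m+1)) * ((m:ℚ)+1) := by
    exact_mod_cast congrArg (Nat.cast : ℕ → ℚ)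
      (h : (n+1) * n.choose m = (n+1).choose (m+1) * (m+1))
  simp only [Nat.add_sub_cancel]
  push_cast
  linear_combination (-1:ℚ) * hc

lemma lemC (n : ℕ) (hn : 1 ≤ n) :
    ∑ k ∈ Finset.Icc 1 n, (-1:ℚ)^(k+1) * (1/(k:ℚ)) * (n.choose k)
      = ∑ j ∈ Finset.Icc 1 n, (1/(j:ℚ)) := by
  induction n, hn using Nat.le_induction with
  | base => simp
  | succ n hn ih =>
    have htop : ∀ (f : ℕ → ℚ), ∑ k ∈ Finset.Icc 1 (n+1), f k
        = (∑ k ∈ Finset.Icc 1 n, f k) + f (n+1) := by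
      intro f
      rw [← Finset.Ico_add_one_right_eq_Icc, Finset.sum_Ico_succ_top (by omega), Finset.Ico_add_one_right_eq_Icc]
    have hpascal : ∀ k ∈ Finset.Icc 1 (n+1),
        (-1:ℚ)^(k+1) * (1/(k:ℚ)) * ((n+1).choose k)
        = (-1:ℚ)^(k+1) * (1/(k:ℚ)) * (n.choose k)
          + (-1:ℚ)^(k+1) * (1/((n:ℚ)+1)) * ((n+1).choose k) := by
      intro k hk
      simp only [Finset.mem_Icc] at hk
      obtain ⟨hk1, hk2⟩ := hk
      have hkne : (k:ℚ) ≠ 0 := by exact_mod_cast Nat.one_le_iff_ne_zero.mp hk1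
      have hnne : ((n:ℚ)+1) ≠ 0 := by positivity
      have hA := lemA n k hk1
      have hP : ((n+1).choose k : ℚ) = (n.choose (k-1)) + (n.choose k) := by
        obtain ⟨m, rfl⟩ := Nat.exists_eq_add_of_le hk1
        rw [show 1 + m = m + 1 by omega, Nat.choose_succ_succ']
        push_cast
        simp
      have key : ((n.choose (k-1) : ℚ))/(k:ℚ) = (((n+1).choose k : ℚ))/((n:ℚ)+1) := by
        rw [div_eq_div_iff hkne hnne]
        linarith [hA]
      rw [hP]
      linear_combination ((-1:ℚ)^(k+1)) * key + ((-1:ℚ)^(k+1) * (1/((n:ℚ)+1))) * hP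
    rw [Finset.sum_congr rfl hpascal, Finset.sum_add_distrib]
    have h1 : ∑ k ∈ Finset.Icc 1 (n+1), (-1:ℚ)^(k+1) * (1/(k:ℚ)) * (n.choose k)
        = ∑ k ∈ Finset.Icc 1 n, (-1:ℚ)^(k+1) * (1/(k:ℚ)) * (n.choose k) := by
      rw [htop]
      simp [Nat.choose_succ_self]
    have h2 : ∑ k ∈ Finset.Icc 1 (n+1), (-1:ℚ)^(k+1) * (1/((n:ℚ)+1)) * ((n+1).choose k)
        = 1/((n:ℚ)+1) := by
      have hfac : ∑ k ∈ Finset.Icc 1 (n+1), (-1:ℚ)^(k+1) * (1/((n:ℚ)+1)) * ((n+1).choose k)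
          = (1/((n:ℚ)+1)) * ∑ k ∈ Finset.Icc 1 (n+1), (-1:ℚ)^(k+1) * ((n+1).choose k) := by
        rw [Finset.mul_sum]
        apply Finset.sum_congr rfl
        intro k _
        ring
      rw [hfac, lemB (n+1) (by omega)]
      ring
    push_cast at h1 h2 ⊢
    rw [h1, h2, ih, htop (fun j => 1/(j:ℚ))]
    push_cast
    ring

theorem stmt16 (n : ℕ) (hn : 0 < n) :
    ∑ k ∈ Finset.Icc 1 n, (1/(k:ℚ)) * ∑ j ∈ Finset.Icc 1 k, (1/(j:ℚ)) =
      ∑ k ∈ Finset.Icc 1 n, (-1:ℚ)^(k+1) * (1/(k:ℚ)^2) * (n.choose k) := by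
  induction n, hn using Nat.le_induction with
  | base => norm_num
  | succ n hn ih =>
    have htop : ∀ (f : ℕ → ℚ), ∑ k ∈ Finset.Icc 1 (n+1), f k
        = (∑ k ∈ Finset.Icc 1 n, f k) + f (n+1) := by
      intro f
      rw [← Finset.Ico_add_one_right_eq_Icc, Finset.sum_Ico_succ_top (by omega), Finset.Ico_add_one_right_eq_Icc]
    have hpascal : ∀ k ∈ Finset.Icc 1 (n+1),
        (-1:ℚ)^(k+1) * (1/(k:ℚ)^2) * ((n+1).choose k)
        = (-1:ℚ)^(k+1) * (1/(k:ℚ)^2) * (n.choose k)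
          + (-1:ℚ)^(k+1) * (1/(k:ℚ)) * (1/((n:ℚ)+1)) * ((n+1).choose k) := by
      intro k hk
      simp only [Finset.mem_Icc] at hk
      obtain ⟨hk1, hk2⟩ := hk
      have hkne : (k:ℚ) ≠ 0 := by exact_mod_cast Nat.one_le_iff_ne_zero.mp hk1
      have hnne : ((n:ℚ)+1) ≠ 0 := by positivity
      have hA := lemA n k hk1
      have hP : ((n+1).choose k : ℚ) = (n.choose (k-1)) + (n.choose k) := by
        obtain ⟨m, rfl⟩ := Nat.exists_eq_add_of_le hk1
        rw [show 1 + m = m + 1 by omega, Nat.choose_succ_succ']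
        push_cast
        simp
      have key : ((n.choose (k-1) : ℚ))/(k:ℚ) = (((n+1).choose k : ℚ))/((n:ℚ)+1) := by
        rw [div_eq_div_iff hkne hnne]
        linarith [hA]
      rw [hP]
      linear_combination ((-1:ℚ)^(k+1) * (1/(k:ℚ))) * key + ((-1:ℚ)^(k+1) * (1/(k:ℚ)) * (1/((n:ℚ)+1))) * hP
    rw [Finset.sum_congr rfl hpascal, Finset.sum_add_distrib]
    have h1 : ∑ k ∈ Finset.Icc 1 (n+1), (-1:ℚ)^(k+1) * (1/(k:ℚ)^2) * (n.choose k)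
        = ∑ k ∈ Finset.Icc 1 n, (-1:ℚ)^(k+1) * (1/(k:ℚ)^2) * (n.choose k) := by
      rw [htop]
      simp [Nat.choose_succ_self]
    have h2 : ∑ k ∈ Finset.Icc 1 (n+1),
          (-1:ℚ)^(k+1) * (1/(k:ℚ)) * (1/((n:ℚ)+1)) * ((n+1).choose k)
        = (1/((n:ℚ)+1)) * ∑ j ∈ Finset.Icc 1 (n+1), (1/(j:ℚ)) := by
      have hfac : ∑ k ∈ Finset.Icc 1 (n+1),
            (-1:ℚ)^(k+1) * (1/(k:ℚ)) * (1/((n:ℚ)+1)) * ((n+1).choose k)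
          = (1/((n:ℚ)+1)) * ∑ k ∈ Finset.Icc 1 (n+1),
            (-1:ℚ)^(k+1) * (1/(k:ℚ)) * ((n+1).choose k) := by
        rw [Finset.mul_sum]
        apply Finset.sum_congr rfl
        intro k _
        ring
      rw [hfac, lemC (n+1) (by omega)]
    push_cast at h1 h2 ⊢
    rw [h1, h2, ← ih]
    rw [htop (fun k => (1/(k:ℚ)) * ∑ j ∈ Finset.Icc 1 k, (1/(j:ℚ)))]
    push_cast
    ring
end
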